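/- arXiv:1106.1509 — 2 statements merged into one kernel-verified Lean document; each statement's English description precedes it below -/
import Mathlib

section
/- Let H be a Hilbert space, r > 0, 1 ≤ p < ∞, and let F be a linear delay operator satisfying ∫₀ᵀ ‖(Fy)(t)‖_H^p dt ≤ M_p ∫_{-r}^T ‖y(t)‖_H^p dt for all y ∈ L^p([-r,T]; H) and all T ≥ 0. Define the structure operator S on functions φ : [-r,0] → H by (Sφ)(θ) = F( (→φ)_{-θ} ), where →φ is the extension of φ to [-r,∞) by zero on (0,∞) and (→φ)_s(θ) = →φ(s+θ). Then S extends to a bounded linear operator on L^p([-r,0]; H) satisfying ∫_{-r}^0 ‖(Sφ)(θ)‖_H^p dθ ≤ M_p ∫_{-r}^0 ‖φ(θ)‖_H^p dθ. -/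
open MeasureTheory Set

/-- the structure operator `(Sφ)(θ) = F((→φ)_{-θ}) = (F →φ)(-θ)`,
where `→φ` is the extension of `φ` by zero on `(0,∞)`, satisfies
`∫_{-r}^0 ‖(Sφ)(θ)‖^p dθ ≤ M_p ∫_{-r}^0 ‖φ(θ)‖^p dθ`, hence extends to a
bounded linear operator on `L^p([-r,0];H)`. -/
theorem stmt6
    {H : Type*} [NormedAddCommGroup H] [InnerProductSpace ℝ H] [CompleteSpace H]
    (r : ℝ) (hr : 0 < r) (p : ℝ) (hp : 1 ≤ p)
    -- the delay operator in extended form, with its `L^p` bound on every `[0,T]`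
    (F : (ℝ → H) →ₗ[ℝ] (ℝ → H)) (Mp : ℝ) (hMp : 0 < Mp)
    (hF : ∀ T : ℝ, 0 ≤ T → ∀ y : ℝ → H,
      ∫ t in (0 : ℝ)..T, ‖F y t‖ ^ p ≤ Mp * ∫ t in (-r)..T, ‖y t‖ ^ p)
    (φ : ℝ → H)
    (hφ : MemLp φ (ENNReal.ofReal p) (volume.restrict (Icc (-r) (0 : ℝ)))) :
    ∫ θ in (-r)..(0 : ℝ),
        ‖F (fun t => if t ≤ 0 then φ t else 0) (-θ)‖ ^ p
      ≤ Mp * ∫ θ in (-r)..(0 : ℝ), ‖φ θ‖ ^ p := by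
  set y : ℝ → H := fun t => if t ≤ 0 then φ t else 0 with hy
  have hp0 : p ≠ 0 := by linarith
  have hp0' : 0 ≤ p := by linarith
  -- step 1: change of variables θ ↦ -θ
  have h1 : (∫ θ in (-r)..(0:ℝ), ‖F y (-θ)‖ ^ p)
      = ∫ t in (0:ℝ)..r, ‖F y t‖ ^ p := by
    have := intervalIntegral.integral_comp_neg (a := -r) (b := 0)
      (f := fun t => ‖F y t‖ ^ p)
    simpa using this
  -- the two pieces on the right
  have hcongr : EqOn (fun t => ‖y t‖ ^ p) (fun t => ‖φ t‖ ^ p) (uIcc (-r) (0:ℝ)) := by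
    intro t ht
    rw [uIcc_of_le (by linarith)] at ht
    simp [hy, ht.2]
  have hφint : IntervalIntegrable (fun t => ‖φ t‖ ^ p) volume (-r) 0 := by
    have : Integrable (fun t => ‖φ t‖ ^ p) (volume.restrict (Icc (-r) (0:ℝ))) := by
      have := hφ.integrable_norm_rpow (by simpa using lt_of_lt_of_le one_pos hp)
        (by simp)
      simpa [ENNReal.toReal_ofReal hp0'] using this
    rw [intervalIntegrable_iff_integrableOn_Ioc_of_le (by linarith)]
    exact MeasureTheory.IntegrableOn.mono_set this Ioc_subset_Icc_self
  have hyint : IntervalIntegrable (fun t => ‖y t‖ ^ p) volume (-r) 0 := by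
    apply hφint.congr
    intro t ht
    exact (hcongr (uIoc_subset_uIcc ht)).symm
  have h2 : (∫ t in (-r)..(0:ℝ), ‖y t‖ ^ p) = ∫ t in (-r)..(0:ℝ), ‖φ t‖ ^ p :=
    intervalIntegral.integral_congr hcongr
  have h3 : (∫ t in (0:ℝ)..r, ‖y t‖ ^ p) = 0 := by
    rw [intervalIntegral.integral_of_le hr.le]
    rw [setIntegral_congr_fun (g := fun _ => (0:ℝ)) measurableSet_Ioc
      (fun t ht => by simp [hy, not_le.mpr ht.1, Real.zero_rpow hp0])]
    simp
  have hyint2 : IntervalIntegrable (fun t => ‖y t‖ ^ p) volume 0 r := by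
    apply (intervalIntegrable_const (c := (0:ℝ))).congr
    intro t ht
    rw [uIoc_of_le hr.le] at ht
    simp [hy, not_le.mpr ht.1, Real.zero_rpow hp0]
  have hsplit : (∫ t in (-r)..r, ‖y t‖ ^ p)
      = (∫ t in (-r)..(0:ℝ), ‖y t‖ ^ p) + ∫ t in (0:ℝ)..r, ‖y t‖ ^ p :=
    (intervalIntegral.integral_add_adjacent_intervals hyint hyint2).symm
  calc (∫ θ in (-r)..(0:ℝ), ‖F y (-θ)‖ ^ p)
      = ∫ t in (0:ℝ)..r, ‖F y t‖ ^ p := h1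
    _ ≤ Mp * ∫ t in (-r)..r, ‖y t‖ ^ p := hF r hr.le y
    _ = Mp * ∫ θ in (-r)..(0:ℝ), ‖φ θ‖ ^ p := by rw [hsplit, h3, h2, add_zero]
end

section
/- Let H be a Hilbert space, r > 0, B₀ ∈ L(H), a ∈ L¹([-r,0]; ℝ), δ > 0, and α ∈ (0,1). If y₁, y₂ ∈ C^α([-r,δ]; D(A)) with y₁ = y₂ on [-r,0], then the function g(s) = ∫_{-r}^0 a(θ) B₀ (y₁(s+θ) - y₂(s+θ)) dθ belongs to C^α([0,δ]; H) and, provided δ < r, satisfies ‖g‖_{C^α([0,δ];H)} ≤ ‖B₀‖ · ‖a‖_{L¹([-δ,0];ℝ)} · ‖y₁ - y₂‖_{C^α([0,δ]; D(A))}. -/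
open MeasureTheory Set

noncomputable section

variable {X : Type*} [NormedAddCommGroup X]

def supN (a b : ℝ) (u : ℝ → X) : ℝ := ⨆ t : Icc a b, ‖u (t : ℝ)‖

def holderSemi (α a b : ℝ) (u : ℝ → X) : ℝ :=
  ⨆ p : Icc a b × Icc a b,
    if (p.1 : ℝ) = (p.2 : ℝ) then 0
    else ‖u p.1 - u p.2‖ / |(p.1 : ℝ) - (p.2 : ℝ)| ^ α

def cAlpha (α a b : ℝ) (u : ℝ → X) : ℝ := supN a b u + holderSemi α a b u

def IsHolderOn (α a b : ℝ) (u : ℝ → X) : Prop :=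
  ∃ C : ℝ, ∀ s ∈ Icc a b, ∀ t ∈ Icc a b, ‖u t - u s‖ ≤ C * |t - s| ^ α

variable {H : Type*} [NormedAddCommGroup H] [InnerProductSpace ℝ H] [CompleteSpace H]

def supND (A : H →ₗ[ℝ] H) (a b : ℝ) (u : ℝ → H) : ℝ :=
  ⨆ t : Icc a b, (‖u (t : ℝ)‖ + ‖A (u (t : ℝ))‖)

def holderSemiD (A : H →ₗ[ℝ] H) (α a b : ℝ) (u : ℝ → H) : ℝ :=
  ⨆ p : Icc a b × Icc a b,
    if (p.1 : ℝ) = (p.2 : ℝ) then 0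
    else (‖u p.1 - u p.2‖ + ‖A (u p.1) - A (u p.2)‖) / |(p.1 : ℝ) - (p.2 : ℝ)| ^ α

def cAlphaD (A : H →ₗ[ℝ] H) (α a b : ℝ) (u : ℝ → H) : ℝ :=
  supND A a b u + holderSemiD A α a b u

def IsHolderOnD (A : H →ₗ[ℝ] H) (α a b : ℝ) (u : ℝ → H) : Prop :=
  ∃ C : ℝ, ∀ s ∈ Icc a b, ∀ t ∈ Icc a b,
    ‖u t - u s‖ + ‖A (u t) - A (u s)‖ ≤ C * |t - s| ^ α


open Filter Topology

lemma holder_continuousOn {E : Type*} [NormedAddCommGroup E] {C α : ℝ} (hα : 0 < α)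
    {S : Set ℝ} {f : ℝ → E} (h : ∀ s ∈ S, ∀ t ∈ S, ‖f t - f s‖ ≤ C * |t - s| ^ α) :
    ContinuousOn f S := by
  intro x hx
  rw [ContinuousWithinAt, ← tendsto_sub_nhds_zero_iff]
  have hb : Tendsto (fun y : ℝ => C * |y - x| ^ α) (nhdsWithin x S) (nhds 0) := by
    have h1 : ContinuousAt (fun y : ℝ => |y - x|) x :=
      (continuous_abs.comp (continuous_id.sub continuous_const)).continuousAt
    have h3 : ContinuousAt (fun y : ℝ => C * |y - x| ^ α) x :=
      continuousAt_const.mul (h1.rpow_const (Or.inr hα.le))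
    have h4 : Tendsto (fun y : ℝ => C * |y - x| ^ α) (nhdsWithin x S)
        (nhds (C * |x - x| ^ α)) := h3.continuousWithinAt
    simpa [Real.zero_rpow hα.ne'] using h4
  refine squeeze_zero_norm' ?_ hb
  filter_upwards [self_mem_nhdsWithin] with y hy
  simpa using h x hx y hy

lemma int_est {H : Type*} [NormedAddCommGroup H] [NormedSpace ℝ H]
    (B₀ : H →L[ℝ] H) (a : ℝ → ℝ) (r c D : ℝ) (hrc : -r ≤ c) (hc0 : c ≤ 0)
    (ha : IntegrableOn a (Icc (-r) 0) volume) (v : ℝ → H)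
    (hv : IntervalIntegrable (fun θ => a θ • B₀ (v θ)) volume (-r) 0)
    (hz : ∀ θ ∈ Ioc (-r) c, v θ = 0)
    (hD : ∀ θ ∈ Icc c (0:ℝ), ‖v θ‖ ≤ D) :
    ‖∫ θ in (-r)..(0:ℝ), a θ • B₀ (v θ)‖ ≤ ‖B₀‖ * (∫ θ in c..(0:ℝ), |a θ|) * D := by
  have hr0 : -r ≤ 0 := le_trans hrc hc0
  have hsub1 : uIcc (-r) c ⊆ uIcc (-r) (0:ℝ) := by
    rw [uIcc_of_le hrc, uIcc_of_le hr0]; exact Icc_subset_Icc le_rfl hc0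
  have hsub2 : uIcc c (0:ℝ) ⊆ uIcc (-r) (0:ℝ) := by
    rw [uIcc_of_le hc0, uIcc_of_le hr0]; exact Icc_subset_Icc hrc le_rfl
  have hn1 : IntervalIntegrable (fun θ => ‖a θ • B₀ (v θ)‖) volume (-r) c :=
    (hv.norm).mono_set hsub1
  have hn2 : IntervalIntegrable (fun θ => ‖a θ • B₀ (v θ)‖) volume c 0 :=
    (hv.norm).mono_set hsub2
  have habs : IntervalIntegrable (fun θ => ‖B₀‖ * D * |a θ|) volume c 0 := by
    have : IntegrableOn (fun θ => ‖B₀‖ * D * |a θ|) (Icc c 0) volume := by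
      have h0 : IntegrableOn (fun θ => ‖B₀‖ * D * ‖a θ‖) (Icc (-r) 0) volume :=
        ha.norm.const_mul (‖B₀‖ * D)
      simpa [Real.norm_eq_abs] using h0.mono_set (Icc_subset_Icc hrc le_rfl)
    exact (this.mono_set (by rw [uIcc_of_le hc0])).intervalIntegrable
  calc ‖∫ θ in (-r)..(0:ℝ), a θ • B₀ (v θ)‖
      ≤ ∫ θ in (-r)..(0:ℝ), ‖a θ • B₀ (v θ)‖ :=
        intervalIntegral.norm_integral_le_integral_norm hr0
    _ = (∫ θ in (-r)..c, ‖a θ • B₀ (v θ)‖) + ∫ θ in c..(0:ℝ), ‖a θ • B₀ (v θ)‖ :=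
        (intervalIntegral.integral_add_adjacent_intervals hn1 hn2).symm
    _ = ∫ θ in c..(0:ℝ), ‖a θ • B₀ (v θ)‖ := by
        rw [show (∫ θ in (-r)..c, ‖a θ • B₀ (v θ)‖) = ∫ θ in (-r)..c, (0:ℝ) from ?_]
        · simp
        · apply intervalIntegral.integral_congr_ae
          filter_upwards with θ hθ
          rw [uIoc_of_le hrc] at hθ
          simp [hz θ hθ]
    _ ≤ ∫ θ in c..(0:ℝ), ‖B₀‖ * D * |a θ| := by
        apply intervalIntegral.integral_mono_on hc0 hn2 habs
        intro θ hθ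
        have h1 : ‖a θ • B₀ (v θ)‖ = |a θ| * ‖B₀ (v θ)‖ := by
          rw [norm_smul, Real.norm_eq_abs]
        have h2 : ‖B₀ (v θ)‖ ≤ ‖B₀‖ * ‖v θ‖ := B₀.le_opNorm _
        have h3 := hD θ hθ
        have h4 : (0:ℝ) ≤ |a θ| := abs_nonneg _
        have h5 : (0:ℝ) ≤ ‖B₀‖ := norm_nonneg _
        rw [h1]
        calc |a θ| * ‖B₀ (v θ)‖ ≤ |a θ| * (‖B₀‖ * D) :=
              mul_le_mul_of_nonneg_left (h2.trans (mul_le_mul_of_nonneg_left h3 h5)) h4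
          _ = ‖B₀‖ * D * |a θ| := by ring
    _ = ‖B₀‖ * (∫ θ in c..(0:ℝ), |a θ|) * D := by
        rw [intervalIntegral.integral_const_mul]; ring

lemma stmt16_aux {H : Type*} [NormedAddCommGroup H] [InnerProductSpace ℝ H] [CompleteSpace H]
    (A : H →ₗ[ℝ] H) (r δ : ℝ) (hr : 0 < r) (hδ : 0 < δ)
    (α : ℝ) (hα0 : 0 < α)
    (B₀ : H →L[ℝ] H) (a : ℝ → ℝ)
    (ha : IntegrableOn a (Icc (-r) (0 : ℝ)) volume)
    (w : ℝ → H) (Cw : ℝ) (hCw0 : 0 ≤ Cw)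
    (hw0 : ∀ t ∈ Icc (-r) (0:ℝ), w t = 0)
    (hwD : ∀ s ∈ Icc (-r) δ, ∀ t ∈ Icc (-r) δ,
      ‖w t - w s‖ + ‖A (w t) - A (w s)‖ ≤ Cw * |t - s| ^ α) :
    IsHolderOn α 0 δ (fun s => ∫ θ in (-r)..(0 : ℝ), a θ • B₀ (w (s + θ))) ∧
    (δ < r →
      cAlpha α 0 δ (fun s => ∫ θ in (-r)..(0 : ℝ), a θ • B₀ (w (s + θ)))
        ≤ ‖B₀‖ * (∫ θ in (-δ)..(0 : ℝ), |a θ|) * cAlphaD A α 0 δ w) := by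
  have hr0 : -r ≤ 0 := by linarith
  have hw : ∀ s ∈ Icc (-r) δ, ∀ t ∈ Icc (-r) δ, ‖w t - w s‖ ≤ Cw * |t - s| ^ α :=
    fun s hs t ht => le_trans (le_add_of_nonneg_right (norm_nonneg _)) (hwD s hs t ht)
  have hwz : w 0 = 0 := hw0 0 ⟨hr0, le_rfl⟩
  -- continuity and integrability
  have hcont : ∀ s ∈ Icc (0:ℝ) δ, ContinuousOn (fun θ => w (s + θ)) (Icc (-r) 0) := by
    intro s hs
    apply holder_continuousOn hα0 (C := Cw)
    intro θ hθ θ' hθ'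
    have hm : s + θ ∈ Icc (-r) δ := ⟨by linarith [hθ.1, hs.1], by linarith [hθ.2, hs.2]⟩
    have hm' : s + θ' ∈ Icc (-r) δ := ⟨by linarith [hθ'.1, hs.1], by linarith [hθ'.2, hs.2]⟩
    have := hw _ hm _ hm'
    simpa [add_sub_add_left_eq_sub] using this
  have hint : ∀ s ∈ Icc (0:ℝ) δ,
      IntervalIntegrable (fun θ => a θ • B₀ (w (s + θ))) volume (-r) 0 := by
    intro s hs
    have hio : IntegrableOn (fun θ => a θ • B₀ (w (s + θ))) (Icc (-r) 0) volume := by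
      apply Integrable.mono' (g := fun θ => (‖B₀‖ * (Cw * (r + δ) ^ α)) * |a θ|)
      · have h0 : IntegrableOn (fun θ => (‖B₀‖ * (Cw * (r + δ) ^ α)) * ‖a θ‖)
            (Icc (-r) 0) volume := ha.norm.const_mul _
        have h1 : IntegrableOn (fun θ => (‖B₀‖ * (Cw * (r + δ) ^ α)) * |a θ|)
            (Icc (-r) 0) volume := by simpa [Real.norm_eq_abs] using h0
        exact h1
      · exact ha.aestronglyMeasurable.smul
          (((B₀.continuous.comp_continuousOn (hcont s hs)).aestronglyMeasurable
            measurableSet_Icc))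
      · rw [ae_restrict_iff' measurableSet_Icc]
        filter_upwards with θ hθ
        have hm : s + θ ∈ Icc (-r) δ := ⟨by linarith [hθ.1, hs.1], by linarith [hθ.2, hs.2]⟩
        have h1 : ‖w (s + θ)‖ ≤ Cw * (r + δ) ^ α := by
          have h2 := hw 0 ⟨hr0, hδ.le⟩ _ hm
          rw [hwz, sub_zero, sub_zero] at h2
          refine h2.trans ?_
          have h3 : |s + θ| ≤ r + δ := by
            rw [abs_le]; constructor <;> [linarith [hθ.1, hs.1, hδ.le]; linarith [hθ.2, hs.2, hr.le]]
          exact mul_le_mul_of_nonneg_left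
            (Real.rpow_le_rpow (abs_nonneg _) h3 hα0.le) hCw0
        calc ‖a θ • B₀ (w (s + θ))‖ = |a θ| * ‖B₀ (w (s + θ))‖ := by
              rw [norm_smul, Real.norm_eq_abs]
          _ ≤ |a θ| * (‖B₀‖ * (Cw * (r + δ) ^ α)) := by
              refine mul_le_mul_of_nonneg_left ?_ (abs_nonneg _)
              exact (B₀.le_opNorm _).trans
                (mul_le_mul_of_nonneg_left h1 (norm_nonneg _))
          _ = (‖B₀‖ * (Cw * (r + δ) ^ α)) * |a θ| := by ring
    exact (hio.mono_set (by rw [uIcc_of_le hr0])).intervalIntegrable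
  have hintd : ∀ s ∈ Icc (0:ℝ) δ, ∀ t ∈ Icc (0:ℝ) δ,
      IntervalIntegrable (fun θ => a θ • B₀ (w (t + θ) - w (s + θ))) volume (-r) 0 := by
    intro s hs t ht
    have he : (fun θ => a θ • B₀ (w (t + θ) - w (s + θ)))
        = fun θ => a θ • B₀ (w (t + θ)) - a θ • B₀ (w (s + θ)) := by
      funext θ; rw [map_sub, smul_sub]
    rw [he]; exact (hint t ht).sub (hint s hs)
  have hdiff : ∀ s ∈ Icc (0:ℝ) δ, ∀ t ∈ Icc (0:ℝ) δ,
      (∫ θ in (-r)..(0:ℝ), a θ • B₀ (w (t + θ)))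
        - (∫ θ in (-r)..(0:ℝ), a θ • B₀ (w (s + θ)))
      = ∫ θ in (-r)..(0:ℝ), a θ • B₀ (w (t + θ) - w (s + θ)) := by
    intro s hs t ht
    rw [← intervalIntegral.integral_sub (hint t ht) (hint s hs)]
    congr 1; funext θ; rw [map_sub, smul_sub]
  -- part 1
  have key1 : ∀ s ∈ Icc (0:ℝ) δ, ∀ t ∈ Icc (0:ℝ) δ,
      ‖(∫ θ in (-r)..(0:ℝ), a θ • B₀ (w (t + θ)))
        - ∫ θ in (-r)..(0:ℝ), a θ • B₀ (w (s + θ))‖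
      ≤ (‖B₀‖ * (∫ θ in (-r)..(0:ℝ), |a θ|) * Cw) * |t - s| ^ α := by
    intro s hs t ht
    rw [hdiff s hs t ht]
    have hD : ∀ θ ∈ Icc (-r) (0:ℝ), ‖w (t + θ) - w (s + θ)‖ ≤ Cw * |t - s| ^ α := by
      intro θ hθ
      have hm : s + θ ∈ Icc (-r) δ := ⟨by linarith [hθ.1, hs.1], by linarith [hθ.2, hs.2]⟩
      have hm' : t + θ ∈ Icc (-r) δ := ⟨by linarith [hθ.1, ht.1], by linarith [hθ.2, ht.2]⟩
      have h2 := hw _ hm _ hm'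
      have h3 : t + θ - (s + θ) = t - s := by ring
      rwa [h3] at h2
    calc ‖∫ θ in (-r)..(0:ℝ), a θ • B₀ (w (t + θ) - w (s + θ))‖
        ≤ ‖B₀‖ * (∫ θ in (-r)..(0:ℝ), |a θ|) * (Cw * |t - s| ^ α) :=
          int_est B₀ a r (-r) (Cw * |t - s| ^ α) le_rfl hr0 ha _
            (hintd s hs t ht) (by simp) hD
      _ = (‖B₀‖ * (∫ θ in (-r)..(0:ℝ), |a θ|) * Cw) * |t - s| ^ α := by ring
  constructor
  · exact ⟨‖B₀‖ * (∫ θ in (-r)..(0:ℝ), |a θ|) * Cw, fun s hs t ht => key1 s hs t ht⟩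
  -- part 2
  intro hδr
  have hI0 : 0 ≤ ∫ θ in (-δ)..(0:ℝ), |a θ| :=
    intervalIntegral.integral_nonneg (by linarith) (fun θ _ => abs_nonneg _)
  haveI hne : Nonempty (Icc (0:ℝ) δ) := ⟨⟨0, le_rfl, hδ.le⟩⟩
  have hsubI : Icc (0:ℝ) δ ⊆ Icc (-r) δ := Icc_subset_Icc (by linarith) le_rfl
  have hbddM : BddAbove (range fun t : Icc (0:ℝ) δ => ‖w t‖ + ‖A (w t)‖) := by
    refine ⟨Cw * δ ^ α, ?_⟩
    rintro x ⟨t, rfl⟩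
    have h2 := hwD 0 ⟨hr0, hδ.le⟩ t (hsubI t.2)
    simp only [hwz, map_zero, sub_zero] at h2
    refine h2.trans (mul_le_mul_of_nonneg_left ?_ hCw0)
    apply Real.rpow_le_rpow (abs_nonneg _) _ hα0.le
    rw [abs_of_nonneg t.2.1]; exact t.2.2
  have hMle : ∀ t ∈ Icc (0:ℝ) δ, ‖w t‖ + ‖A (w t)‖ ≤ supND A 0 δ w := by
    intro t ht
    exact le_ciSup hbddM ⟨t, ht⟩
  have hM0 : 0 ≤ supND A 0 δ w :=
    le_trans (by positivity) (hMle 0 ⟨le_rfl, hδ.le⟩)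
  have hbddH : BddAbove (range fun p : Icc (0:ℝ) δ × Icc (0:ℝ) δ =>
      if (p.1 : ℝ) = (p.2 : ℝ) then 0
      else (‖w p.1 - w p.2‖ + ‖A (w p.1) - A (w p.2)‖) / |(p.1 : ℝ) - (p.2 : ℝ)| ^ α) := by
    refine ⟨Cw, ?_⟩
    rintro x ⟨p, rfl⟩
    dsimp only
    split
    · exact hCw0
    · rename_i hne'
      have hd : (0:ℝ) < |(p.1 : ℝ) - (p.2 : ℝ)| ^ α :=
        Real.rpow_pos_of_pos (abs_pos.mpr (sub_ne_zero.mpr hne')) _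
      rw [div_le_iff₀ hd]
      exact hwD p.2 (hsubI p.2.2) p.1 (hsubI p.1.2)
  have hHle : ∀ u ∈ Icc (0:ℝ) δ, ∀ v ∈ Icc (0:ℝ) δ,
      ‖w v - w u‖ ≤ holderSemiD A α 0 δ w * |v - u| ^ α := by
    intro u hu v hv
    rcases eq_or_ne v u with he | hne'
    · simp [he, Real.zero_rpow hα0.ne']
    · have hd : (0:ℝ) < |v - u| ^ α :=
        Real.rpow_pos_of_pos (abs_pos.mpr (sub_ne_zero.mpr hne')) _
      have h2 := le_ciSup hbddH ((⟨⟨v, hv⟩, ⟨u, hu⟩⟩ : Icc (0:ℝ) δ × Icc (0:ℝ) δ))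
      dsimp only at h2
      rw [if_neg hne', div_le_iff₀ hd] at h2
      exact le_trans (le_add_of_nonneg_right (norm_nonneg _)) h2
  have hHs0 : 0 ≤ holderSemiD A α 0 δ w := by
    have hc : (0:ℝ) < |δ - 0| ^ α :=
      Real.rpow_pos_of_pos (abs_pos.mpr (sub_ne_zero.mpr (by linarith))) _
    have h2 := (norm_nonneg _).trans (hHle 0 ⟨le_rfl, hδ.le⟩ δ ⟨hδ.le, le_rfl⟩)
    exact (mul_nonneg_iff_of_pos_right hc).mp h2
  have htrunc : ∀ x, -δ ≤ x → x ≤ δ → ∀ y, -δ ≤ y → y ≤ δ →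
      ‖w y - w x‖ ≤ holderSemiD A α 0 δ w * |y - x| ^ α := by
    intro x hx1 hx2 y hy1 hy2
    have hwx : w x = w (max x 0) := by
      rcases le_total x 0 with h | h
      · rw [max_eq_right h, hw0 x ⟨by linarith, h⟩, hwz]
      · rw [max_eq_left h]
    have hwy : w y = w (max y 0) := by
      rcases le_total y 0 with h | h
      · rw [max_eq_right h, hw0 y ⟨by linarith, h⟩, hwz]
      · rw [max_eq_left h]
    have hmx : max x 0 ∈ Icc (0:ℝ) δ := ⟨le_max_right _ _, max_le hx2 hδ.le⟩
    have hmy : max y 0 ∈ Icc (0:ℝ) δ := ⟨le_max_right _ _, max_le hy2 hδ.le⟩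
    rw [hwx, hwy]
    refine (hHle _ hmx _ hmy).trans ?_
    refine mul_le_mul_of_nonneg_left ?_ hHs0
    exact Real.rpow_le_rpow (abs_nonneg _) (abs_max_sub_max_le_abs _ _ _) hα0.le
  have keysup : ∀ s ∈ Icc (0:ℝ) δ,
      ‖∫ θ in (-r)..(0:ℝ), a θ • B₀ (w (s + θ))‖
      ≤ ‖B₀‖ * (∫ θ in (-δ)..(0:ℝ), |a θ|) * supND A 0 δ w := by
    intro s hs
    apply int_est B₀ a r (-δ) _ (by linarith) (by linarith) ha _ (hint s hs)
    · intro θ hθ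
      exact hw0 _ ⟨by linarith [hθ.1.le, hs.1], by linarith [hθ.2, hs.2]⟩
    · intro θ hθ
      rcases le_total (s + θ) 0 with h | h
      · rw [hw0 _ ⟨by linarith [hθ.1, hs.1, hδr], h⟩]
        simpa using hM0
      · exact (le_add_of_nonneg_right (norm_nonneg _)).trans
          (hMle _ ⟨h, by linarith [hθ.2, hs.2]⟩)
  have key2 : ∀ s ∈ Icc (0:ℝ) δ, ∀ t ∈ Icc (0:ℝ) δ,
      ‖(∫ θ in (-r)..(0:ℝ), a θ • B₀ (w (t + θ)))
        - ∫ θ in (-r)..(0:ℝ), a θ • B₀ (w (s + θ))‖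
      ≤ (‖B₀‖ * (∫ θ in (-δ)..(0:ℝ), |a θ|) * holderSemiD A α 0 δ w) * |t - s| ^ α := by
    intro s hs t ht
    rw [hdiff s hs t ht]
    have hz2 : ∀ θ ∈ Ioc (-r) (-δ), w (t + θ) - w (s + θ) = 0 := by
      intro θ hθ
      rw [hw0 (t + θ) ⟨by linarith [hθ.1.le, ht.1], by linarith [hθ.2, ht.2]⟩,
        hw0 (s + θ) ⟨by linarith [hθ.1.le, hs.1], by linarith [hθ.2, hs.2]⟩, sub_zero]
    have hD : ∀ θ ∈ Icc (-δ) (0:ℝ),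
        ‖w (t + θ) - w (s + θ)‖ ≤ holderSemiD A α 0 δ w * |t - s| ^ α := by
      intro θ hθ
      have h4 := htrunc (s + θ) (by linarith [hθ.1, hs.1]) (by linarith [hθ.2, hs.2])
        (t + θ) (by linarith [hθ.1, ht.1]) (by linarith [hθ.2, ht.2])
      have h5 : t + θ - (s + θ) = t - s := by ring
      rwa [h5] at h4
    calc ‖∫ θ in (-r)..(0:ℝ), a θ • B₀ (w (t + θ) - w (s + θ))‖
        ≤ ‖B₀‖ * (∫ θ in (-δ)..(0:ℝ), |a θ|) * (holderSemiD A α 0 δ w * |t - s| ^ α) :=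
          int_est B₀ a r (-δ) _ (by linarith) (by linarith) ha _ (hintd s hs t ht) hz2 hD
      _ = (‖B₀‖ * (∫ θ in (-δ)..(0:ℝ), |a θ|) * holderSemiD A α 0 δ w) * |t - s| ^ α := by
          ring
  have hgsup : supN 0 δ (fun s => ∫ θ in (-r)..(0:ℝ), a θ • B₀ (w (s + θ)))
      ≤ ‖B₀‖ * (∫ θ in (-δ)..(0:ℝ), |a θ|) * supND A 0 δ w :=
    ciSup_le fun t => keysup t t.2
  have hghol : holderSemi α 0 δ (fun s => ∫ θ in (-r)..(0:ℝ), a θ • B₀ (w (s + θ)))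
      ≤ ‖B₀‖ * (∫ θ in (-δ)..(0:ℝ), |a θ|) * holderSemiD A α 0 δ w := by
    refine ciSup_le fun p => ?_
    dsimp only
    split
    · exact mul_nonneg (mul_nonneg (norm_nonneg _) hI0) hHs0
    · rename_i hne'
      have hd : (0:ℝ) < |(p.1 : ℝ) - (p.2 : ℝ)| ^ α :=
        Real.rpow_pos_of_pos (abs_pos.mpr (sub_ne_zero.mpr hne')) _
      rw [div_le_iff₀ hd]
      exact key2 p.2 p.2.2 p.1 p.1.2
  simp only [cAlpha, cAlphaD]
  calc supN 0 δ (fun s => ∫ θ in (-r)..(0:ℝ), a θ • B₀ (w (s + θ)))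
        + holderSemi α 0 δ (fun s => ∫ θ in (-r)..(0:ℝ), a θ • B₀ (w (s + θ)))
      ≤ ‖B₀‖ * (∫ θ in (-δ)..(0:ℝ), |a θ|) * supND A 0 δ w
        + ‖B₀‖ * (∫ θ in (-δ)..(0:ℝ), |a θ|) * holderSemiD A α 0 δ w :=
        add_le_add hgsup hghol
    _ = ‖B₀‖ * (∫ θ in (-δ)..(0:ℝ), |a θ|) * (supND A 0 δ w + holderSemiD A α 0 δ w) := by
        ring

/-- if `y₁, y₂ ∈ C^α([-r,δ];D(A))` agree on `[-r,0]`, then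
`g(s) = ∫_{-r}^0 a(θ)B₀(y₁(s+θ)-y₂(s+θ))dθ ∈ C^α([0,δ];H)`, and for `δ < r`,
`‖g‖_{C^α([0,δ];H)} ≤ ‖B₀‖ ‖a‖_{L¹([-δ,0])} ‖y₁-y₂‖_{C^α([0,δ];D(A))}`. -/
theorem stmt16
    (A : H →ₗ[ℝ] H) (r δ : ℝ) (hr : 0 < r) (hδ : 0 < δ)
    (α : ℝ) (hα : α ∈ Ioo (0 : ℝ) 1)
    (B₀ : H →L[ℝ] H) (a : ℝ → ℝ)
    (ha : IntegrableOn a (Icc (-r) (0 : ℝ)) volume)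
    (y₁ y₂ : ℝ → H)
    (h₁ : IsHolderOnD A α (-r) δ y₁) (h₂ : IsHolderOnD A α (-r) δ y₂)
    (hagree : ∀ t ∈ Icc (-r) (0 : ℝ), y₁ t = y₂ t) :
    IsHolderOn α 0 δ
      (fun s => ∫ θ in (-r)..(0 : ℝ), a θ • B₀ (y₁ (s + θ) - y₂ (s + θ))) ∧
    (δ < r →
      cAlpha α 0 δ
          (fun s => ∫ θ in (-r)..(0 : ℝ), a θ • B₀ (y₁ (s + θ) - y₂ (s + θ)))
        ≤ ‖B₀‖ * (∫ θ in (-δ)..(0 : ℝ), |a θ|)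
            * cAlphaD A α 0 δ (fun t => y₁ t - y₂ t)) := by
  obtain ⟨C₁, hC₁⟩ := h₁
  obtain ⟨C₂, hC₂⟩ := h₂
  have hw0 : ∀ t ∈ Icc (-r) (0:ℝ), y₁ t - y₂ t = 0 :=
    fun t ht => sub_eq_zero.mpr (hagree t ht)
  have hwD : ∀ s ∈ Icc (-r) δ, ∀ t ∈ Icc (-r) δ,
      ‖(y₁ t - y₂ t) - (y₁ s - y₂ s)‖ + ‖A (y₁ t - y₂ t) - A (y₁ s - y₂ s)‖
        ≤ (|C₁| + |C₂|) * |t - s| ^ α := by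
    intro s hs t ht
    have e1 : (y₁ t - y₂ t) - (y₁ s - y₂ s) = (y₁ t - y₁ s) - (y₂ t - y₂ s) := by abel
    have e2 : A (y₁ t - y₂ t) - A (y₁ s - y₂ s)
        = (A (y₁ t) - A (y₁ s)) - (A (y₂ t) - A (y₂ s)) := by
      simp only [map_sub]; abel
    rw [e1, e2]
    have t1 := norm_sub_le (y₁ t - y₁ s) (y₂ t - y₂ s)
    have t2 := norm_sub_le (A (y₁ t) - A (y₁ s)) (A (y₂ t) - A (y₂ s))
    have b1 := hC₁ s hs t ht
    have b2 := hC₂ s hs t ht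
    have hp : (0:ℝ) ≤ |t - s| ^ α := Real.rpow_nonneg (abs_nonneg _) _
    have a1 : C₁ * |t - s| ^ α ≤ |C₁| * |t - s| ^ α :=
      mul_le_mul_of_nonneg_right (le_abs_self _) hp
    have a2 : C₂ * |t - s| ^ α ≤ |C₂| * |t - s| ^ α :=
      mul_le_mul_of_nonneg_right (le_abs_self _) hp
    linarith
  exact stmt16_aux A r δ hr hδ α hα.1 B₀ a ha (fun t => y₁ t - y₂ t) (|C₁| + |C₂|)
    (by positivity) hw0 hwD

end
end
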